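/- Let k ≥ 1 and w : Fin n → ℕ with 1 ≤ w i ≤ k for all i, and let I_k ⊆ MvPolynomial (Fin n) ℝ be the ideal generated by all w-weighted-homogeneous polynomials of weighted degree > k. Then the quotient A = MvPolynomial (Fin n) ℝ / I_k is a Weil algebra: A is finite-dimensional as a real vector space, A is a local ring, its maximal ideal equals its nilradical N_A, N_A is the image in A of the ideal generated by the variables x₁,…,x_n, N_A^{k+1} = 0, and A = ℝ·1 ⊕ N_A as ℝ-vector spaces. -/

import Mathlib

open MvPolynomial

/-- The ideal `I_k` of `ℝ[x₁,…,xₙ]` generated by all `w`-weighted-homogeneous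
polynomials of weighted degree `> k`. -/
noncomputable def weightIdeal (n k : ℕ) (w : Fin n → ℕ) : Ideal (MvPolynomial (Fin n) ℝ) :=
  Ideal.span {P : MvPolynomial (Fin n) ℝ | ∃ i : ℕ, k < i ∧ P.IsWeightedHomogeneous w i}

section aux

variable {n k : ℕ} {w : Fin n → ℕ}

lemma aux_degree_le_weight (hw : ∀ i, 1 ≤ w i) (d : Fin n →₀ ℕ) :
    (d.sum fun _ e => e) ≤ Finsupp.weight w d := by
  classical
  rw [Finsupp.weight_apply, Finsupp.sum, Finsupp.sum]
  exact Finset.sum_le_sum fun i _ => by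
    simpa [smul_eq_mul] using Nat.le_mul_of_pos_right (d i) (hw i)

lemma monomial_mem_weightIdeal {d : Fin n →₀ ℕ} (hdk : k < Finsupp.weight w d) (c : ℝ) :
    monomial d c ∈ weightIdeal n k w :=
  Ideal.subset_span ⟨Finsupp.weight w d, hdk, isWeightedHomogeneous_monomial _ _ _ rfl⟩

lemma weightIdeal_reduce (hw : ∀ i, 1 ≤ w i) (P : MvPolynomial (Fin n) ℝ) :
    ∃ Q : MvPolynomial (Fin n) ℝ, Q.totalDegree ≤ k ∧ P - Q ∈ weightIdeal n k w := by
  classical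
  refine ⟨∑ d ∈ P.support.filter fun d => Finsupp.weight w d ≤ k,
    monomial d (coeff d P), ?_, ?_⟩
  · refine (totalDegree_finset_sum _ _).trans (Finset.sup_le fun d hd => ?_)
    simp only [Finset.mem_filter] at hd
    exact (totalDegree_monomial_le _ _).trans ((aux_degree_le_weight hw d).trans hd.2)
  · have hP := P.support_sum_monomial_coeff
    have hsplit := Finset.sum_filter_add_sum_filter_not P.support
      (fun d => Finsupp.weight w d ≤ k) (fun d => monomial d (coeff d P))
    have heq := sub_eq_of_eq_add' (hsplit.trans hP).symm
    rw [heq]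
    exact Ideal.sum_mem _ fun d hd =>
      monomial_mem_weightIdeal (by simpa using (Finset.mem_filter.mp hd).2) _

lemma weightIdeal_le_span (hk : 1 ≤ k) :
    weightIdeal n k w ≤ Ideal.span (Set.range (X : Fin n → MvPolynomial (Fin n) ℝ)) := by
  rw [weightIdeal, Ideal.span_le]
  rintro P ⟨i, hik, hP⟩
  rw [← Set.image_univ, SetLike.mem_coe, mem_ideal_span_X_image]
  intro d hd
  have hwd : Finsupp.weight w d = i := hP (mem_support_iff.mp hd)
  have hd0 : d ≠ 0 := by
    rintro rfl
    rw [map_zero] at hwd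
    omega
  obtain ⟨j, hj⟩ := Finsupp.ne_iff.mp hd0
  exact ⟨j, Set.mem_univ j, by simpa using hj⟩

lemma span_X_pow_le (hw : ∀ i, 1 ≤ w i) :
    Ideal.span (Set.range (X : Fin n → MvPolynomial (Fin n) ℝ)) ^ (k + 1) ≤
      weightIdeal n k w := by
  classical
  have key : ∀ (l : List (MvPolynomial (Fin n) ℝ)),
      (∀ p ∈ l, p ∈ Set.range (X : Fin n → MvPolynomial (Fin n) ℝ)) →
      ∃ m, l.length ≤ m ∧ IsWeightedHomogeneous w l.prod m := by
    intro l
    induction l with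
    | nil => exact fun _ => ⟨0, le_refl 0, by simpa using isWeightedHomogeneous_one ℝ w⟩
    | cons p t ih =>
      intro h
      obtain ⟨m, hm, hhom⟩ := ih fun q hq => h q (List.mem_cons_of_mem _ hq)
      obtain ⟨i, rfl⟩ := h p List.mem_cons_self
      refine ⟨w i + m, ?_, ?_⟩
      · have := hw i; simp only [List.length_cons]; omega
      · rw [List.prod_cons]
        exact (isWeightedHomogeneous_X ℝ w i).mul hhom
  rw [Ideal.span, Submodule.span_pow, Submodule.span_le]
  intro x hx
  rw [Set.mem_pow] at hx
  obtain ⟨f, rfl⟩ := hx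
  obtain ⟨m, hm, hhom⟩ := key (List.ofFn fun i => (f i : MvPolynomial (Fin n) ℝ)) (by
    intro p hp
    rw [List.mem_ofFn] at hp
    obtain ⟨i, rfl⟩ := hp
    exact (f i).2)
  rw [List.length_ofFn] at hm
  exact Ideal.subset_span ⟨m, by omega, hhom⟩

end aux

section aux2

variable {n k : ℕ} {w : Fin n → ℕ}

lemma one_not_mem_span_X :
    (1 : MvPolynomial (Fin n) ℝ) ∉ Ideal.span (Set.range (X : Fin n → MvPolynomial (Fin n) ℝ)) := by
  rw [← Set.image_univ, mem_ideal_span_X_image]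
  push_neg
  refine ⟨0, ?_, fun i _ => rfl⟩
  rw [mem_support_iff]
  simp

lemma sub_C_mem_span_X (P : MvPolynomial (Fin n) ℝ) :
    P - C (constantCoeff P) ∈ Ideal.span (Set.range (X : Fin n → MvPolynomial (Fin n) ℝ)) := by
  rw [← Set.image_univ, mem_ideal_span_X_image]
  intro d hd
  rw [mem_support_iff] at hd
  by_cases hd0 : d = 0
  · subst hd0
    simp [constantCoeff_eq] at hd
  · obtain ⟨j, hj⟩ := Finsupp.ne_iff.mp hd0
    exact ⟨j, Set.mem_univ j, by simpa using hj⟩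

lemma smul_one_eq_mk_C (c : ℝ) :
    c • (1 : MvPolynomial (Fin n) ℝ ⧸ weightIdeal n k w) =
      Ideal.Quotient.mk (weightIdeal n k w) (C c) := by
  rw [← Algebra.algebraMap_eq_smul_one,
    IsScalarTower.algebraMap_apply ℝ (MvPolynomial (Fin n) ℝ)
      (MvPolynomial (Fin n) ℝ ⧸ weightIdeal n k w),
    Ideal.Quotient.algebraMap_eq, MvPolynomial.algebraMap_eq]

end aux2

set_option maxHeartbeats 1000000 in
set_option synthInstance.maxHeartbeats 400000 in
/-- The quotient `A = ℝ[x₁,…,xₙ]/I_k` (for weights `1 ≤ w i ≤ k`) is a Weil algebra: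
it is finite-dimensional over `ℝ`, a local ring whose maximal ideal is the nilradical
`N_A`, `N_A` is the image of the ideal generated by the variables, `N_A^(k+1) = 0`,
and `A = ℝ·1 ⊕ N_A` as ℝ-vector spaces. -/
theorem stmt_10 (n k : ℕ) (hk : 1 ≤ k) (w : Fin n → ℕ)
    (hw : ∀ i, 1 ≤ w i ∧ w i ≤ k) :
    FiniteDimensional ℝ (MvPolynomial (Fin n) ℝ ⧸ weightIdeal n k w) ∧
    (∃ h : IsLocalRing (MvPolynomial (Fin n) ℝ ⧸ weightIdeal n k w),
      @IsLocalRing.maximalIdeal (MvPolynomial (Fin n) ℝ ⧸ weightIdeal n k w) _ h =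
        nilradical (MvPolynomial (Fin n) ℝ ⧸ weightIdeal n k w)) ∧
    nilradical (MvPolynomial (Fin n) ℝ ⧸ weightIdeal n k w) =
      Ideal.map (Ideal.Quotient.mk (weightIdeal n k w))
        (Ideal.span (Set.range (X : Fin n → MvPolynomial (Fin n) ℝ))) ∧
    nilradical (MvPolynomial (Fin n) ℝ ⧸ weightIdeal n k w) ^ (k + 1) = ⊥ ∧
    IsCompl
      (Submodule.span ℝ ({1} : Set (MvPolynomial (Fin n) ℝ ⧸ weightIdeal n k w)))
      ((nilradical (MvPolynomial (Fin n) ℝ ⧸ weightIdeal n k w)).restrictScalars ℝ) := by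
  classical
  have hw1 : ∀ i, 1 ≤ w i := fun i => (hw i).1
  have hIm : weightIdeal n k w ≤ Ideal.span (Set.range (X : Fin n → MvPolynomial (Fin n) ℝ)) :=
    weightIdeal_le_span hk
  have hpow : Ideal.span (Set.range (X : Fin n → MvPolynomial (Fin n) ℝ)) ^ (k + 1) ≤
      weightIdeal n k w := span_X_pow_le hw1
  have hJpow : (Ideal.map (Ideal.Quotient.mk (weightIdeal n k w))
      (Ideal.span (Set.range (X : Fin n → MvPolynomial (Fin n) ℝ)))) ^ (k + 1) = ⊥ := by
    rw [← Ideal.map_pow, Ideal.map_eq_bot_iff_le_ker]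
    rwa [Ideal.mk_ker]
  have hnilJ : ∀ a ∈ Ideal.map (Ideal.Quotient.mk (weightIdeal n k w))
      (Ideal.span (Set.range (X : Fin n → MvPolynomial (Fin n) ℝ))), IsNilpotent a := by
    intro a ha
    refine ⟨k + 1, ?_⟩
    have h2 := Ideal.pow_mem_pow ha (k + 1)
    rwa [hJpow, Ideal.mem_bot] at h2
  have h1J : (1 : MvPolynomial (Fin n) ℝ ⧸ weightIdeal n k w) ∉
      Ideal.map (Ideal.Quotient.mk (weightIdeal n k w))
      (Ideal.span (Set.range (X : Fin n → MvPolynomial (Fin n) ℝ))) := by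
    intro h
    obtain ⟨P, hP, hPe⟩ :=
      (Ideal.mem_map_iff_of_surjective _ Ideal.Quotient.mk_surjective).mp h
    have h' : P - 1 ∈ weightIdeal n k w :=
      (Ideal.Quotient.mk_eq_mk_iff_sub_mem P 1).mp (by rwa [map_one])
    have h2 : (1 : MvPolynomial (Fin n) ℝ) ∈
        Ideal.span (Set.range (X : Fin n → MvPolynomial (Fin n) ℝ)) := by
      have := (Ideal.span (Set.range (X : Fin n → MvPolynomial (Fin n) ℝ))).sub_mem hP (hIm h')
      simpa using this
    exact one_not_mem_span_X h2
  haveI hnt : Nontrivial (MvPolynomial (Fin n) ℝ ⧸ weightIdeal n k w) :=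
    ⟨⟨0, 1, fun h01 => h1J (h01 ▸ (Ideal.map _ _).zero_mem)⟩⟩
  have hdecomp : ∀ a : MvPolynomial (Fin n) ℝ ⧸ weightIdeal n k w,
      ∃ (c : ℝ) (j : MvPolynomial (Fin n) ℝ ⧸ weightIdeal n k w),
        j ∈ Ideal.map (Ideal.Quotient.mk (weightIdeal n k w))
          (Ideal.span (Set.range (X : Fin n → MvPolynomial (Fin n) ℝ))) ∧ a = c • 1 + j := by
    intro a
    obtain ⟨P, rfl⟩ := Ideal.Quotient.mk_surjective a
    refine ⟨constantCoeff P,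
      Ideal.Quotient.mk (weightIdeal n k w) (P - C (constantCoeff P)),
      Ideal.mem_map_of_mem _ (sub_C_mem_span_X P), ?_⟩
    rw [map_sub, smul_one_eq_mk_C]
    ring
  have hunit : ∀ a : MvPolynomial (Fin n) ℝ ⧸ weightIdeal n k w,
      a ∉ Ideal.map (Ideal.Quotient.mk (weightIdeal n k w))
        (Ideal.span (Set.range (X : Fin n → MvPolynomial (Fin n) ℝ))) → IsUnit a := by
    intro a haJ
    obtain ⟨c, j, hj, rfl⟩ := hdecomp a
    have hc : c ≠ 0 := by
      rintro rfl
      rw [zero_smul, zero_add] at haJ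
      exact haJ hj
    have hu : IsUnit (c • (1 : MvPolynomial (Fin n) ℝ ⧸ weightIdeal n k w)) := by
      rw [← Algebra.algebraMap_eq_smul_one]
      exact IsUnit.map (algebraMap ℝ _) (isUnit_iff_ne_zero.mpr hc)
    exact (hnilJ j hj).isUnit_add_left_of_commute hu (Commute.all _ _)
  have hnr : nilradical (MvPolynomial (Fin n) ℝ ⧸ weightIdeal n k w) =
      Ideal.map (Ideal.Quotient.mk (weightIdeal n k w))
        (Ideal.span (Set.range (X : Fin n → MvPolynomial (Fin n) ℝ))) := by
    ext a
    constructor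
    · intro ha
      by_contra haJ
      exact (hunit a haJ).not_isNilpotent (mem_nilradical.mp ha)
    · exact fun ha => mem_nilradical.mpr (hnilJ a ha)
  haveI hloc : IsLocalRing (MvPolynomial (Fin n) ℝ ⧸ weightIdeal n k w) :=
    IsLocalRing.of_isUnit_or_isUnit_one_sub_self fun a => by
      by_cases h : a ∈ Ideal.map (Ideal.Quotient.mk (weightIdeal n k w))
        (Ideal.span (Set.range (X : Fin n → MvPolynomial (Fin n) ℝ)))
      · exact Or.inr (hnilJ a h).isUnit_one_sub
      · exact Or.inl (hunit a h)
  have hmax : IsLocalRing.maximalIdeal (MvPolynomial (Fin n) ℝ ⧸ weightIdeal n k w) =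
      nilradical (MvPolynomial (Fin n) ℝ ⧸ weightIdeal n k w) := by
    ext a
    rw [IsLocalRing.mem_maximalIdeal, mem_nonunits_iff, hnr]
    constructor
    · intro h
      by_contra haJ
      exact h (hunit a haJ)
    · exact fun h => (hnilJ a h).not_isUnit
  have hfd : FiniteDimensional ℝ (MvPolynomial (Fin n) ℝ ⧸ weightIdeal n k w) := by
    refine Module.Finite.of_surjective
      ((Ideal.Quotient.mkₐ ℝ (weightIdeal n k w)).toLinearMap.comp
        (Submodule.subtype (restrictTotalDegree (Fin n) ℝ k))) ?_
    intro a
    obtain ⟨P, rfl⟩ := Ideal.Quotient.mk_surjective a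
    obtain ⟨Q, hQd, hQI⟩ := weightIdeal_reduce hw1 P
    refine ⟨⟨Q, ((mem_restrictTotalDegree _ _ Q).mpr hQd)⟩, ?_⟩
    simp only [LinearMap.comp_apply, Submodule.subtype_apply, AlgHom.toLinearMap_apply,
      Ideal.Quotient.mkₐ_eq_mk]
    refine (Ideal.Quotient.mk_eq_mk_iff_sub_mem Q P).mpr ?_
    have := (weightIdeal n k w).neg_mem hQI
    simpa using this
  refine ⟨hfd, ⟨hloc, hmax⟩, hnr, by rw [hnr]; exact hJpow, ?_⟩
  rw [hnr]
  constructor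
  · rw [Submodule.disjoint_def]
    intro x hx1 hxJ
    obtain ⟨c, rfl⟩ := Submodule.mem_span_singleton.mp hx1
    rcases eq_or_ne c 0 with rfl | hc
    · simp
    · exfalso
      apply h1J
      have h2 := Submodule.smul_mem
        ((Ideal.map (Ideal.Quotient.mk (weightIdeal n k w))
          (Ideal.span (Set.range (X : Fin n → MvPolynomial (Fin n) ℝ)))).restrictScalars ℝ)
        c⁻¹ hxJ
      rw [smul_smul, inv_mul_cancel₀ hc, one_smul] at h2
      exact h2
  · rw [codisjoint_iff, Submodule.eq_top_iff']
    intro a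
    obtain ⟨c, j, hj, rfl⟩ := hdecomp a
    exact Submodule.add_mem_sup
      (Submodule.smul_mem _ c (Submodule.mem_span_singleton_self 1)) hj
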